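/- arXiv:2309.02815 — 2 statements merged into one kernel-verified Lean document; each statement's English description precedes it below -/
import Mathlib

section
/- Let $P$ be a symmetric positive definite $d\times d$ real matrix and $\bar A$ a $d\times d$ real matrix satisfying the Lyapunov equation $\bar A^\top P + P\bar A = -I_d$. Then for any $\varepsilon$ with $0 < \varepsilon \le 1/(2\lambda_{\max}(P))$ and any $z\in\mathbb{R}^d$, one has $z^\top(P + \varepsilon \bar A^\top P + \varepsilon P\bar A + \varepsilon^2 P)z \le (1 - \varepsilon/(2\lambda_{\max}(P)))\, z^\top P z$. -/
open Matrix

lemma rayleigh_upper {d : ℕ} (P : Matrix (Fin d) (Fin d) ℝ) (hP : P.IsHermitian)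
    (lam : ℝ) (hlam : ∀ i, hP.eigenvalues i ≤ lam) (z : Fin d → ℝ) :
    z ⬝ᵥ (P *ᵥ z) ≤ lam * (z ⬝ᵥ z) := by
  have hpsd : PosSemidef (lam • (1 : Matrix (Fin d) (Fin d) ℝ) - P) := by
    have hdiag : PosSemidef
        (Matrix.diagonal (fun i => lam - hP.eigenvalues i)) := by
      refine posSemidef_diagonal_iff.mpr fun i => ?_
      linarith [hlam i]
    have := hdiag.mul_mul_conjTranspose_same
      (hP.eigenvectorUnitary : Matrix (Fin d) (Fin d) ℝ)
    convert this using 1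
    have hspec := hP.spectral_theorem
    have hU : (hP.eigenvectorUnitary : Matrix (Fin d) (Fin d) ℝ) *
        ((hP.eigenvectorUnitary : Matrix (Fin d) (Fin d) ℝ))ᴴ = 1 := by
      rw [← Matrix.star_eq_conjTranspose]
      exact (Matrix.mem_unitaryGroup_iff).mp (hP.eigenvectorUnitary).2
    have hdd : Matrix.diagonal (fun i => lam - hP.eigenvalues i)
        = lam • (1 : Matrix (Fin d) (Fin d) ℝ)
          - Matrix.diagonal (fun i => hP.eigenvalues i) := by
      ext i j
      by_cases h : i = j <;> simp [Matrix.diagonal_apply, Matrix.one_apply, h]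
    rw [hdd, Matrix.mul_sub, Matrix.sub_mul]
    congr 1
    rw [Matrix.mul_smul, Matrix.mul_one, Matrix.smul_mul, hU]
  have h := hpsd.dotProduct_mulVec_nonneg z
  have : star z ⬝ᵥ ((lam • (1 : Matrix (Fin d) (Fin d) ℝ) - P) *ᵥ z)
      = lam * (z ⬝ᵥ z) - z ⬝ᵥ (P *ᵥ z) := by
    simp [Matrix.sub_mulVec, Matrix.smul_mulVec, dotProduct_sub,
      dotProduct_smul, smul_eq_mul]
  rw [this] at h
  linarith

theorem lyapunov_contraction {d : ℕ} (hd : 0 < d)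
    (P A : Matrix (Fin d) (Fin d) ℝ) (hP : P.PosDef)
    (hLyap : Aᵀ * P + P * A = -(1 : Matrix (Fin d) (Fin d) ℝ))
    (lam : ℝ) (hlam : lam = ⨆ i, hP.1.eigenvalues i)
    (ε : ℝ) (hε0 : 0 < ε) (hε : ε ≤ 1 / (2 * lam)) (z : Fin d → ℝ) :
    z ⬝ᵥ ((P + ε • (Aᵀ * P) + ε • (P * A) + (ε ^ 2) • P) *ᵥ z)
      ≤ (1 - ε / (2 * lam)) * (z ⬝ᵥ (P *ᵥ z)) := by
  have hle : ∀ i, hP.1.eigenvalues i ≤ lam := by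
    intro i
    rw [hlam]
    exact le_ciSup (Set.Finite.bddAbove (Set.finite_range _)) i
  have hi : ∃ i : Fin d, True := ⟨⟨0, hd⟩, trivial⟩
  obtain ⟨i0, -⟩ := hi
  have hlampos : 0 < lam := lt_of_lt_of_le (hP.eigenvalues_pos i0) (hle i0)
  have hray : z ⬝ᵥ (P *ᵥ z) ≤ lam * (z ⬝ᵥ z) := rayleigh_upper P hP.1 lam hle z
  have hPz : 0 ≤ z ⬝ᵥ (P *ᵥ z) := by
    have := hP.posSemidef.dotProduct_mulVec_nonneg z
    simpa using this
  -- expand LHS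
  have hexp : z ⬝ᵥ ((P + ε • (Aᵀ * P) + ε • (P * A) + (ε ^ 2) • P) *ᵥ z)
      = z ⬝ᵥ (P *ᵥ z) + ε * (z ⬝ᵥ (((Aᵀ * P) + (P * A)) *ᵥ z))
        + ε ^ 2 * (z ⬝ᵥ (P *ᵥ z)) := by
    simp [Matrix.add_mulVec, Matrix.smul_mulVec, dotProduct_add,
      dotProduct_smul, smul_eq_mul]
    ring
  rw [hexp, hLyap]
  have hneg : z ⬝ᵥ ((-(1 : Matrix (Fin d) (Fin d) ℝ)) *ᵥ z) = -(z ⬝ᵥ z) := by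
    simp [Matrix.neg_mulVec]
  rw [hneg]
  -- suffices: ε*zPz + (1/(2lam)) zPz ≤ z⬝z
  have hzz : (1 / lam) * (z ⬝ᵥ (P *ᵥ z)) ≤ z ⬝ᵥ z := by
    rw [div_mul_eq_mul_div, one_mul, div_le_iff₀ hlampos]
    linarith [hray]
  have key : ε * (z ⬝ᵥ (P *ᵥ z)) + (1 / (2 * lam)) * (z ⬝ᵥ (P *ᵥ z)) ≤ z ⬝ᵥ z := by
    have h1 : ε * (z ⬝ᵥ (P *ᵥ z)) ≤ (1 / (2 * lam)) * (z ⬝ᵥ (P *ᵥ z)) :=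
      mul_le_mul_of_nonneg_right hε hPz
    have h2 : (1 / (2 * lam)) * (z ⬝ᵥ (P *ᵥ z)) + (1 / (2 * lam)) * (z ⬝ᵥ (P *ᵥ z))
        = (1 / lam) * (z ⬝ᵥ (P *ᵥ z)) := by
      field_simp; ring
    linarith
  have := mul_le_mul_of_nonneg_left key (le_of_lt hε0)
  have hdiv : ε / (2 * lam) = ε * (1 / (2 * lam)) := by ring
  nlinarith [this]
end

section
/- Let $(x_i)_{i=1}^n$ be nonnegative reals, and suppose for some fixed $\epsilon > 0$, $\zeta \ge 0$, $\chi \ge 0$ we have, for all $u \ge \epsilon$, $\sum_{i=1}^n \mathbf{1}\{x_i > u\} \le \zeta/u^2 + \chi$. Then, choosing $\epsilon = \sqrt{\zeta/n}$ (assuming $\zeta > 0$), $\sum_{i=1}^n x_i \le 2\sqrt{n\zeta} + \chi \max_{i\le n} x_i$. -/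
open Finset MeasureTheory intervalIntegral

lemma indicator_intInt (ε M c : ℝ) (hεM : ε ≤ M) (hcM : c ≤ M) :
    ∫ u in ε..M, (if u < c then (1:ℝ) else 0)
      = if ε < c then c - ε else 0 := by
  by_cases h : ε < c
  · have hae : ∀ᵐ u : ℝ, u ∈ Set.uIoc ε M →
        (if u < c then (1:ℝ) else 0) = Set.indicator {x | x ≤ c} (fun _ => (1:ℝ)) u := by
      have hne : ∀ᵐ u : ℝ, u ≠ c := by
        rw [MeasureTheory.ae_iff]
        simp [measure_singleton]
      filter_upwards [hne] with u hu _
      rcases lt_trichotomy u c with h' | h' | h'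
      · simp [h', h'.le, Set.indicator]
      · exact absurd h' hu
      · simp [Set.indicator, not_lt.mpr h'.le, not_le.mpr h']
    rw [intervalIntegral.integral_congr_ae hae, if_pos h,
      intervalIntegral.integral_indicator ⟨h.le, hcM⟩]
    simp
  · rw [if_neg h]
    rw [intervalIntegral.integral_congr (g := fun _ => (0:ℝ))]
    · simp
    · intro u hu
      rw [Set.uIcc_of_le hεM] at hu
      have : ¬ u < c := not_lt.mpr (le_trans (not_lt.mp h) hu.1)
      simp [this]

lemma indicator_intervalIntegrable (ε M c : ℝ) :
    IntervalIntegrable (fun u => if u < c then (1:ℝ) else 0) volume ε M := by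
  have he : (fun u => if u < c then (1:ℝ) else 0)
      = Set.indicator (Set.Iio c) (fun _ => (1:ℝ)) := by
    ext u; by_cases h : u < c <;> simp [Set.indicator, h]
  rw [he, intervalIntegrable_iff]
  exact ((integrableOn_const_iff (C := (1:ℝ))).mpr (Or.inr measure_Ioc_lt_top)).indicator measurableSet_Iio

theorem first_order_width_bound (n : ℕ) (hn : 1 ≤ n) (x : ℕ → ℝ) (hx : ∀ i, 0 ≤ x i)
    (ζ χ : ℝ) (hζ : 0 < ζ) (hχ : 0 ≤ χ)
    (hcount : ∀ u : ℝ, Real.sqrt (ζ / n) ≤ u →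
      (∑ i ∈ Finset.Icc 1 n, if u < x i then (1:ℝ) else 0) ≤ ζ / u ^ 2 + χ) :
    (∑ i ∈ Finset.Icc 1 n, x i)
      ≤ 2 * Real.sqrt (n * ζ) + χ * (Finset.Icc 1 n).sup' (by simp [hn]) x := by
  have hne : (Finset.Icc 1 n).Nonempty := by simp [hn]
  set ε := Real.sqrt (ζ / n) with hεdef
  set M := (Finset.Icc 1 n).sup' hne x with hMdef
  have hn0 : (0:ℝ) < n := by exact_mod_cast hn
  have hε0 : 0 < ε := Real.sqrt_pos.mpr (div_pos hζ hn0)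
  have hε2 : ε ^ 2 = ζ / n := Real.sq_sqrt (div_pos hζ hn0).le
  have hM0 : 0 ≤ M := le_trans (hx 1) (Finset.le_sup' x (by simp [hn]))
  have hxM : ∀ i ∈ Finset.Icc 1 n, x i ≤ M := fun i hi => Finset.le_sup' x hi
  have hnε : (n:ℝ) * ε = Real.sqrt (n * ζ) := by
    rw [show (n:ℝ) * ζ = ((n:ℝ) * ε) ^ 2 by rw [mul_pow, hε2]; field_simp]
    rw [Real.sqrt_sq (by positivity)]
  have hζε : ζ / ε = Real.sqrt (n * ζ) := by
    rw [← hnε, div_eq_iff hε0.ne']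
    have h2 : ζ = ε ^ 2 * n := by rw [hε2]; field_simp
    rw [h2]; ring
  by_cases hMε : M ≤ ε
  · calc (∑ i ∈ Finset.Icc 1 n, x i) ≤ ∑ i ∈ Finset.Icc 1 n, ε := by
          exact Finset.sum_le_sum fun i hi => le_trans (hxM i hi) hMε
      _ = n * ε := by simp [Nat.card_Icc, mul_comm]
      _ = Real.sqrt (n * ζ) := hnε
      _ ≤ 2 * Real.sqrt (n * ζ) + χ * M := by
          nlinarith [Real.sqrt_nonneg ((n:ℝ) * ζ), mul_nonneg hχ hM0]
  · push_neg at hMε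
    -- main case
    have hεM : ε ≤ M := hMε.le
    have key : (∑ i ∈ Finset.Icc 1 n, if ε < x i then x i - ε else 0)
        ≤ ζ / ε + χ * M := by
      have hswap : (∑ i ∈ Finset.Icc 1 n, if ε < x i then x i - ε else 0)
          = ∫ u in ε..M, (∑ i ∈ Finset.Icc 1 n, if u < x i then (1:ℝ) else 0) := by
        rw [intervalIntegral.integral_finset_sum
          (fun i _ => indicator_intervalIntegrable ε M (x i))]
        exact Finset.sum_congr rfl fun i hi =>
          (indicator_intInt ε M (x i) hεM (hxM i hi)).symm
      rw [hswap]
      have hint2 : IntervalIntegrable (fun u => ζ / u ^ 2 + χ) volume ε M := by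
        apply ContinuousOn.intervalIntegrable
        apply ContinuousOn.add _ continuousOn_const
        apply ContinuousOn.div continuousOn_const (continuousOn_pow 2)
        intro u hu
        rw [Set.uIcc_of_le hεM] at hu
        exact pow_ne_zero 2 (ne_of_gt (lt_of_lt_of_le hε0 hu.1))
      have hintsum : IntervalIntegrable
          (fun u => ∑ i ∈ Finset.Icc 1 n, if u < x i then (1:ℝ) else 0) volume ε M :=
        by
          rw [intervalIntegrable_iff]
          exact MeasureTheory.integrable_finset_sum _
            (fun i _ => intervalIntegrable_iff.mp (indicator_intervalIntegrable ε M (x i)))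
      have hmono : (∫ u in ε..M, (∑ i ∈ Finset.Icc 1 n, if u < x i then (1:ℝ) else 0))
          ≤ ∫ u in ε..M, (ζ / u ^ 2 + χ) :=
        intervalIntegral.integral_mono_on hεM hintsum hint2
          (fun u hu => hcount u hu.1)
      refine hmono.trans ?_
      have hintζ : IntervalIntegrable (fun u => ζ / u ^ 2) volume ε M := by
        apply ContinuousOn.intervalIntegrable
        apply ContinuousOn.div continuousOn_const (continuousOn_pow 2)
        intro u hu
        rw [Set.uIcc_of_le hεM] at hu
        exact pow_ne_zero 2 (ne_of_gt (lt_of_lt_of_le hε0 hu.1))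
      have hzpow : (∫ u in ε..M, ζ / u ^ 2) = ζ * (1/ε - 1/M) := by
        have h0 : (0:ℝ) ∉ Set.uIcc ε M := by
          rw [Set.uIcc_of_le hεM]
          intro h
          exact absurd h.1 (not_le.mpr hε0)
        have hcg : (∫ u in ε..M, ζ / u ^ 2) = ∫ u in ε..M, ζ * u ^ (-2:ℤ) := by
          apply intervalIntegral.integral_congr
          intro u hu
          have hu0 : u ≠ 0 := fun h => h0 (h ▸ hu)
          field_simp
        rw [hcg, intervalIntegral.integral_const_mul,
          integral_zpow (Or.inr ⟨by norm_num, h0⟩)]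
        have hM0' : M ≠ 0 := ne_of_gt (lt_trans hε0 hMε)
        norm_num [zpow_neg_one]
        field_simp
        exact Or.inl (by ring)
      have hcalc : (∫ u in ε..M, (ζ / u ^ 2 + χ))
          = ζ * (1/ε - 1/M) + χ * (M - ε) := by
        rw [intervalIntegral.integral_add hintζ intervalIntegrable_const, hzpow,
          intervalIntegral.integral_const, smul_eq_mul]
        ring
      rw [hcalc]
      have hMpos : 0 < M := lt_trans hε0 hMε
      have : ζ * (1/ε - 1/M) ≤ ζ / ε := by
        rw [mul_sub, mul_one_div]
        have h4 : 0 ≤ ζ * (1/M) := by positivity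
        linarith
      have h3 : χ * (M - ε) ≤ χ * M :=
        mul_le_mul_of_nonneg_left (by linarith) hχ
      linarith [this, h3]
    have hsplit : (∑ i ∈ Finset.Icc 1 n, x i)
        ≤ n * ε + (∑ i ∈ Finset.Icc 1 n, if ε < x i then x i - ε else 0) := by
      have : (∑ i ∈ Finset.Icc 1 n, x i)
          ≤ ∑ i ∈ Finset.Icc 1 n, (ε + if ε < x i then x i - ε else 0) := by
        apply Finset.sum_le_sum
        intro i hi
        by_cases h : ε < x i
        · simp [h]
        · simp [h]; linarith [not_lt.mp h]
      refine this.trans ?_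
      rw [Finset.sum_add_distrib]
      simp [mul_comm]
    calc (∑ i ∈ Finset.Icc 1 n, x i)
        ≤ n * ε + (ζ / ε + χ * M) := by linarith
      _ = 2 * Real.sqrt (n * ζ) + χ * M := by rw [hnε, hζε]; ring
end
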